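/- Let G=(V,E) be a finite simple undirected graph in which every vertex has positive degree, let α ∈ (0,1], and let p = pr_α(s) be a PageRank vector for a row vector s. Then for every subset of vertices S ⊆ V: p(S) = α s(S) + (1-α)·( (1/2) p(in(S) ∩ out(S)) + (1/2) p(in(S) ∪ out(S)) ). -/
import Mathlib


open Matrix Finset

/-- The lazy random walk transition matrix `W = (1/2)(I + D⁻¹A)` of a simple graph,
acting on row vectors. -/
noncomputable def lazyWalk {V : Type*} [Fintype V] [DecidableEq V] (G : SimpleGraph V)
    [DecidableRel G.Adj] : Matrix V V ℝ :=
  fun u v => (if u = v then (1 : ℝ) / 2 else 0) +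
    (if G.Adj u v then 1 / (2 * (G.degree u : ℝ)) else 0)

/-- `in(S)`: the set of directed edges `(u, v)` of `G` with head `v ∈ S`. -/
def dirIn {V : Type*} [Fintype V] [DecidableEq V] (G : SimpleGraph V)
    [DecidableRel G.Adj] (S : Finset V) : Finset (V × V) :=
  Finset.univ.filter fun e => G.Adj e.1 e.2 ∧ e.2 ∈ S

/-- `out(S)`: the set of directed edges `(u, v)` of `G` with tail `u ∈ S`. -/
def dirOut {V : Type*} [Fintype V] [DecidableEq V] (G : SimpleGraph V)
    [DecidableRel G.Adj] (S : Finset V) : Finset (V × V) :=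
  Finset.univ.filter fun e => G.Adj e.1 e.2 ∧ e.1 ∈ S

/-- `p(A) = ∑_{(u,v) ∈ A} p(u)/d(u)` for a set `A` of directed edges. -/
noncomputable def edgeSum {V : Type*} [Fintype V] [DecidableEq V] (G : SimpleGraph V)
    [DecidableRel G.Adj] (p : V → ℝ) (A : Finset (V × V)) : ℝ :=
  ∑ e ∈ A, p e.1 / (G.degree e.1 : ℝ)

lemma edgeSum_out {V : Type*} [Fintype V] [DecidableEq V] (G : SimpleGraph V)
    [DecidableRel G.Adj] (hdeg : ∀ v, 0 < G.degree v) (p : V → ℝ) (S : Finset V) :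
    edgeSum G p (dirOut G S) = ∑ v ∈ S, p v := by
  unfold edgeSum dirOut
  rw [Finset.sum_filter, Fintype.sum_prod_type]
  have h : ∀ u : V, (∑ v : V, if G.Adj u v ∧ u ∈ S then p u / (G.degree u : ℝ) else 0)
      = if u ∈ S then p u else 0 := by
    intro u
    by_cases hu : u ∈ S
    · simp only [hu, and_true, if_true]
      rw [Finset.sum_ite, Finset.sum_const, Finset.sum_const_zero, add_zero, nsmul_eq_mul]
      have hc : (Finset.univ.filter fun v => G.Adj u v).card = G.degree u := by
        rw [← SimpleGraph.card_neighborFinset_eq_degree]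
        congr 1
        ext v
        simp [SimpleGraph.mem_neighborFinset]
      rw [hc]
      have hd : (G.degree u : ℝ) ≠ 0 := by
        exact_mod_cast (hdeg u).ne'
      field_simp
    · simp [hu]
  rw [Finset.sum_congr rfl fun u _ => h u, Finset.sum_ite_mem, Finset.univ_inter]

lemma edgeSum_in {V : Type*} [Fintype V] [DecidableEq V] (G : SimpleGraph V)
    [DecidableRel G.Adj] (p : V → ℝ) (S : Finset V) :
    edgeSum G p (dirIn G S)
      = ∑ v ∈ S, ∑ u : V, if G.Adj u v then p u / (G.degree u : ℝ) else 0 := by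
  unfold edgeSum dirIn
  rw [Finset.sum_filter, Fintype.sum_prod_type_right]
  rw [show (∑ v ∈ S, ∑ u : V, if G.Adj u v then p u / (G.degree u : ℝ) else 0)
      = ∑ v ∈ Finset.univ ∩ S, ∑ u : V, if G.Adj u v then p u / (G.degree u : ℝ) else 0 by
    rw [Finset.univ_inter]]
  rw [← Finset.sum_ite_mem]
  apply Finset.sum_congr rfl
  intro v _
  by_cases hv : v ∈ S <;> simp [hv]

theorem stmt4 {V : Type*} [Fintype V] [DecidableEq V] (G : SimpleGraph V)
    [DecidableRel G.Adj] (hdeg : ∀ v, 0 < G.degree v)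
    (α : ℝ) (hα : 0 < α ∧ α ≤ 1) (s p : V → ℝ)
    (hp : p = α • s + (1 - α) • (p ᵥ* lazyWalk G)) (S : Finset V) :
    ∑ v ∈ S, p v = α * (∑ v ∈ S, s v) + (1 - α) *
      ((1 / 2) * edgeSum G p (dirIn G S ∩ dirOut G S) +
        (1 / 2) * edgeSum G p (dirIn G S ∪ dirOut G S)) := by
  have key : ∀ v, p v = α * s v + (1 - α) *
      (p v / 2 + ∑ u : V, if G.Adj u v then p u / (2 * (G.degree u : ℝ)) else 0) := by
    intro v
    conv_lhs => rw [hp]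
    simp only [Pi.add_apply, Pi.smul_apply, smul_eq_mul, vecMul, dotProduct, lazyWalk,
      mul_add, Finset.sum_add_distrib, mul_ite, mul_zero, mul_one]
    rw [Finset.sum_ite_eq' Finset.univ v (fun u => p u * (1 / 2))]
    simp only [Finset.mem_univ, if_true]
    have hs : (∑ u : V, if G.Adj u v then p u * (1 / (2 * (G.degree u : ℝ))) else 0)
        = ∑ u : V, if G.Adj u v then p u / (2 * (G.degree u : ℝ)) else 0 :=
      Finset.sum_congr rfl fun u _ => by by_cases h : G.Adj u v <;> simp [h, mul_one_div] <;> ring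
    rw [hs]
    ring
  have hin : (∑ v ∈ S, ∑ u : V, if G.Adj u v then p u / (2 * (G.degree u : ℝ)) else 0)
      = (1 / 2) * ∑ v ∈ S, ∑ u : V, if G.Adj u v then p u / (G.degree u : ℝ) else 0 := by
    rw [Finset.mul_sum]
    refine Finset.sum_congr rfl fun v _ => ?_
    rw [Finset.mul_sum]
    refine Finset.sum_congr rfl fun u _ => ?_
    by_cases h : G.Adj u v <;> simp [h] <;> ring
  have h1 : ∑ v ∈ S, p v = α * (∑ v ∈ S, s v) + (1 - α) *
      ((1 / 2) * (∑ v ∈ S, p v) + (1 / 2) * edgeSum G p (dirIn G S)) := by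
    rw [edgeSum_in G p S]
    calc ∑ v ∈ S, p v = ∑ v ∈ S, (α * s v + (1 - α) *
          (p v / 2 + ∑ u : V, if G.Adj u v then p u / (2 * (G.degree u : ℝ)) else 0)) :=
            Finset.sum_congr rfl fun v _ => key v
      _ = _ := by
          rw [Finset.sum_add_distrib, ← Finset.mul_sum, ← Finset.mul_sum,
            Finset.sum_add_distrib, hin, ← Finset.sum_div]
          ring
  have h2 : edgeSum G p (dirIn G S ∩ dirOut G S) + edgeSum G p (dirIn G S ∪ dirOut G S)
      = edgeSum G p (dirIn G S) + ∑ v ∈ S, p v := by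
    rw [← edgeSum_out G hdeg p S]
    unfold edgeSum
    rw [add_comm]
    exact Finset.sum_union_inter
  linear_combination h1 - ((1 - α) / 2) * h2
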